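/- Let s* ∈ {1,...,M+1} be a maximizer of E over {1,...,M+1}, i.e. E(s*) ≥ E(t) for all t ∈ {1,...,M+1}. Then E is unimodal around s*: for every integer s with 1 ≤ s ≤ s*−1 one has E(s) ≤ E(s+1), and for every integer s with s* ≤ s ≤ M one has E(s) ≥ E(s+1). -/

import Mathlib

open Finset

/-- Expected average reward `E(s)` of the threshold-`s` policy, for `1 ≤ s ≤ M`;
`E(M+1) = 0` corresponds to the always-inactive policy. -/
noncomputable def Ereward (M : ℕ) (p G P B : ℝ) (U : ℕ → ℝ) (s : ℕ) : ℝ :=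
  if s = M + 1 then 0
  else ((s : ℝ) + (1 - p) / p)⁻¹ *
    ((∑ x ∈ Finset.Icc 1 (s - 1), U x)
      + (∑ i ∈ Finset.range (M - s), U (s + i) * (1 - p) ^ i)
      - G / p - P + B)

namespace RewardAux

/-- Discounted tail sum. -/
noncomputable def Tt (M : ℕ) (p : ℝ) (U : ℕ → ℝ) (s : ℕ) : ℝ :=
  ∑ i ∈ Finset.range (M - s), U (s + i) * (1 - p) ^ i

/-- Denominator. -/
noncomputable def Dd (p : ℝ) (s : ℕ) : ℝ := (s : ℝ) + (1 - p) / p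

lemma Dd_pos {p : ℝ} (hp : 0 < p) (hp1 : p < 1) (s : ℕ) : 0 < Dd p s := by
  have h1 : (0:ℝ) ≤ (s:ℝ) := Nat.cast_nonneg s
  have h2 : 0 < (1 - p) / p := div_pos (by linarith) hp
  unfold Dd; linarith

lemma Dd_succ (p : ℝ) (s : ℕ) : Dd p (s+1) = Dd p s + 1 := by
  unfold Dd; push_cast; ring

lemma Tt_high (M : ℕ) (p : ℝ) (U : ℕ → ℝ) {s : ℕ} (h : M ≤ s) : Tt M p U s = 0 := by
  unfold Tt; rw [Nat.sub_eq_zero_of_le h]; simp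

lemma Tt_rec (M : ℕ) (p : ℝ) (U : ℕ → ℝ) {s : ℕ} (h : s + 1 ≤ M) :
    Tt M p U s = U s + (1 - p) * Tt M p U (s+1) := by
  have h1 : M - s = (M - (s+1)) + 1 := by omega
  unfold Tt
  rw [h1, Finset.sum_range_succ', Finset.mul_sum]
  simp only [pow_zero, mul_one, add_zero]
  rw [add_comm]
  congr 1
  refine Finset.sum_congr rfl (fun i _ => ?_)
  have h2 : s + (i+1) = s + 1 + i := by omega
  rw [h2]; ring

section Mono

variable (M : ℕ) (p : ℝ) (U : ℕ → ℝ)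
variable (hp : 0 < p) (hp1 : p < 1)
variable (hU : ∀ ⦃x y : ℕ⦄, 1 ≤ x → x ≤ y → y ≤ M → U y ≤ U x) (hUM : U M = 0)

include hU hUM in
lemma U_nonneg {x : ℕ} (hx : 1 ≤ x) (hxM : x ≤ M) : 0 ≤ U x := by
  have := hU hx hxM le_rfl
  rw [hUM] at this
  exact this

include hp1 hU hUM in
lemma Tt_nonneg {s : ℕ} (hs : 1 ≤ s) : 0 ≤ Tt M p U s := by
  unfold Tt
  refine Finset.sum_nonneg (fun i hi => ?_)
  have hi' : i < M - s := Finset.mem_range.mp hi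
  exact mul_nonneg (U_nonneg M U hU hUM (by omega) (by omega)) (pow_nonneg (by linarith) i)

include hp hp1 hU hUM in
lemma Tt_le {s : ℕ} (hs : 1 ≤ s) (hsM : s + 1 ≤ M) :
    p * Tt M p U (s+1) ≤ U s := by
  set n := M - (s+1) with hn
  have hbound : Tt M p U (s+1) ≤ U s * ∑ i ∈ Finset.range n, (1-p)^i := by
    unfold Tt
    rw [Finset.mul_sum]
    refine Finset.sum_le_sum (fun i hi => ?_)
    have hi' : i < n := Finset.mem_range.mp hi
    have hle : U (s+1+i) ≤ U s := hU hs (by omega) (by omega)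
    exact mul_le_mul_of_nonneg_right hle (pow_nonneg (by linarith) i)
  have hgeom : ∑ i ∈ Finset.range n, (1-p)^i = (1 - (1-p)^n) / p := by
    rw [geom_sum_eq (by intro h; apply absurd h; intro h'; nlinarith) n]
    rw [div_eq_div_iff (by linarith) hp.ne']
    ring
  have h0 : (0:ℝ) ≤ (1-p)^n := pow_nonneg (by linarith) n
  have hU0 : 0 ≤ U s := U_nonneg M U hU hUM hs (by omega)
  have h1 : p * Tt M p U (s+1) ≤ p * (U s * ((1 - (1-p)^n) / p)) := by
    rw [← hgeom]
    exact mul_le_mul_of_nonneg_left hbound hp.le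
  have h2 : p * (U s * ((1 - (1-p)^n) / p)) = U s * (1 - (1-p)^n) := by
    field_simp
  nlinarith

include hp hp1 hU hUM in
lemma Tt_mono {s : ℕ} (hs : 1 ≤ s) (hsM : s ≤ M) :
    Tt M p U (s+1) ≤ Tt M p U s := by
  rcases Nat.lt_or_ge s M with h | h
  · have hrec := Tt_rec M p U (show s + 1 ≤ M by omega)
    have hle := Tt_le M p U hp hp1 hU hUM hs (by omega)
    linarith
  · rw [Tt_high M p U h, Tt_high M p U (by omega)]

end Mono

section Ident

variable (M : ℕ) (p G P B : ℝ) (U : ℕ → ℝ)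
variable (hp : 0 < p) (hp1 : p < 1)

lemma E_eq {s : ℕ} (h : s ≤ M) :
    Ereward M p G P B U s =
      (Dd p s)⁻¹ * ((∑ x ∈ Finset.Icc 1 (s-1), U x) + Tt M p U s - G / p - P + B) := by
  unfold Ereward Tt Dd
  rw [if_neg (by omega)]

lemma E_top : Ereward M p G P B U (M+1) = 0 := by
  unfold Ereward
  rw [if_pos rfl]

lemma sum_Icc_step {s : ℕ} (hs : 1 ≤ s) :
    (∑ x ∈ Finset.Icc 1 s, U x) = (∑ x ∈ Finset.Icc 1 (s-1), U x) + U s := by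
  have hs' : s - 1 + 1 = s := by omega
  conv_lhs => rw [← hs']
  rw [Finset.sum_Icc_succ_top (by omega), hs']

include hp hp1 in
lemma ident1 {s : ℕ} (hs : 1 ≤ s) (hsM : s + 1 ≤ M) :
    (Ereward M p G P B U (s+1) - Ereward M p G P B U s) * Dd p (s+1)
      = p * Tt M p U (s+1) - Ereward M p G P B U s := by
  have hd := Dd_pos hp hp1 s
  have hE1 := E_eq M p G P B U (show s ≤ M by omega)
  have hE2 := E_eq M p G P B U (show s + 1 ≤ M by omega)
  have hsimp : s + 1 - 1 = s := by omega
  rw [hsimp] at hE2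
  rw [hE1, hE2, sum_Icc_step U hs, Tt_rec M p U hsM, Dd_succ]
  have hd1 : Dd p s + 1 > 0 := by linarith
  field_simp
  ring

include hp hp1 in
lemma ident2 {s : ℕ} (hs : 1 ≤ s) (hsM : s + 1 ≤ M) :
    (Ereward M p G P B U (s+1) - Ereward M p G P B U s) * Dd p s
      = p * Tt M p U (s+1) - Ereward M p G P B U (s+1) := by
  have hd := Dd_pos hp hp1 s
  have hE1 := E_eq M p G P B U (show s ≤ M by omega)
  have hE2 := E_eq M p G P B U (show s + 1 ≤ M by omega)
  have hsimp : s + 1 - 1 = s := by omega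
  rw [hsimp] at hE2
  rw [hE1, hE2, sum_Icc_step U hs, Tt_rec M p U hsM, Dd_succ]
  have hd1 : Dd p s + 1 > 0 := by linarith
  field_simp
  ring

include hp hp1 in
lemma downA {u : ℕ} (hu : 1 ≤ u) (huM : u ≤ M)
    (h : p * Tt M p U (u+1) < Ereward M p G P B U u) :
    Ereward M p G P B U (u+1) < Ereward M p G P B U u := by
  rcases Nat.lt_or_ge u M with hlt | hge
  · have hid := ident1 M p G P B U hp hp1 hu (show u + 1 ≤ M by omega)
    have hd := Dd_pos hp hp1 (u+1)
    nlinarith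
  · have huM' : u = M := by omega
    rw [huM'] at h ⊢
    rw [E_top M p G P B U]
    rw [Tt_high M p U (Nat.le_succ M)] at h
    simpa using h

include hp hp1 in
lemma upA {u : ℕ} (hu : 1 ≤ u) (huM : u ≤ M)
    (h : Ereward M p G P B U u < Ereward M p G P B U (u+1)) :
    Ereward M p G P B U u < p * Tt M p U (u+1) := by
  rcases Nat.lt_or_ge u M with hlt | hge
  · have hid := ident1 M p G P B U hp hp1 hu (show u + 1 ≤ M by omega)
    have hd := Dd_pos hp hp1 (u+1)
    nlinarith
  · have huM' : u = M := by omega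
    rw [huM'] at h ⊢
    rw [E_top M p G P B U] at h
    rw [Tt_high M p U (Nat.le_succ M)]
    simpa using h

end Ident

end RewardAux

open RewardAux in
/-- If `s*` maximizes `E` over `{1,...,M+1}`, then `E` is unimodal around `s*`:
nondecreasing up to `s*` and nonincreasing after `s*`. -/
theorem reward_unimodal (M sstar : ℕ) (p G P B : ℝ) (U : ℕ → ℝ)
    (hM : 2 ≤ M) (hp : 0 < p) (hp1 : p < 1)
    (hU : ∀ ⦃x y : ℕ⦄, 1 ≤ x → x ≤ y → y ≤ M → U y ≤ U x)
    (hUM : U M = 0)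
    (hmem : sstar ∈ Finset.Icc 1 (M + 1))
    (hmax : ∀ t ∈ Finset.Icc 1 (M + 1),
      Ereward M p G P B U t ≤ Ereward M p G P B U sstar) :
    (∀ s : ℕ, 1 ≤ s → s ≤ sstar - 1 →
      Ereward M p G P B U s ≤ Ereward M p G P B U (s + 1)) ∧
    (∀ s : ℕ, sstar ≤ s → s ≤ M →
      Ereward M p G P B U (s + 1) ≤ Ereward M p G P B U s) := by
  obtain ⟨sm1, sm2⟩ := Finset.mem_Icc.mp hmem
  set E : ℕ → ℝ := Ereward M p G P B U with hEdef
  -- single step of forward propagation of strict decrease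
  have dec_step : ∀ u : ℕ, 1 ≤ u → u + 1 ≤ M → E (u+1) < E u → E (u+2) < E (u+1) := by
    intro u hu huM h
    have hid := ident2 M p G P B U hp hp1 hu huM
    have hd := Dd_pos hp hp1 u
    have h1 : p * Tt M p U (u+1) < E (u+1) := by nlinarith
    have h2 : Tt M p U (u+2) ≤ Tt M p U (u+1) :=
      Tt_mono M p U hp hp1 hU hUM (by omega) (by omega)
    have h3 : p * Tt M p U (u+2) < E (u+1) := by nlinarith
    exact downA M p G P B U hp hp1 (by omega) (by omega) h3
  -- single step of backward propagation of strict increase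
  have inc_step : ∀ s : ℕ, 2 ≤ s → s ≤ M → E s < E (s+1) → E (s-1) < E s := by
    intro s hs hsM h
    have hA : E s < p * Tt M p U (s+1) := upA M p G P B U hp hp1 (by omega) hsM h
    have h2 : Tt M p U (s+1) ≤ Tt M p U s :=
      Tt_mono M p U hp hp1 hU hUM (by omega) hsM
    have hid := ident2 M p G P B U hp hp1 (show 1 ≤ s - 1 by omega) (show s - 1 + 1 ≤ M by omega)
    have hss : s - 1 + 1 = s := by omega
    rw [hss] at hid
    have hd := Dd_pos hp hp1 (s-1)
    nlinarith
  -- propagation forward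
  have down : ∀ t : ℕ, 1 ≤ t → t ≤ M → E (t+1) < E t →
      ∀ u : ℕ, t ≤ u → u ≤ M → E (u+1) < E u := by
    intro t ht htM hdec u hu
    induction u, hu using Nat.le_induction with
    | base => intro _; exact hdec
    | succ u hu ih =>
      intro huM
      exact dec_step u (by omega) (by omega) (ih (by omega))
  -- propagation backward
  have up : ∀ t : ℕ, t ≤ M → E t < E (t+1) →
      ∀ u : ℕ, 1 ≤ u → u ≤ t → E u < E (u+1) := by
    intro t
    induction t with
    | zero => intro _ _ u hu hu'; omega
    | succ t ih =>
      intro htM h u hu hu'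
      rcases Nat.eq_or_lt_of_le hu' with heq | hlt
      · subst heq; exact h
      · have ht1 : 1 ≤ t := by omega
        have hprev : E t < E (t+1) := by
          have := inc_step (t+1) (by omega) htM h
          simpa using this
        exact ih (by omega) hprev u hu (by omega)
  constructor
  · intro s hs1 hs2
    by_contra hlt
    push_neg at hlt
    have hsM : s ≤ M := by omega
    have hdown := down s hs1 hsM hlt
    have chain : ∀ v : ℕ, s + 1 ≤ v → v ≤ M + 1 → E v < E s := by
      intro v hv
      induction v, hv using Nat.le_induction with
      | base => intro _; exact hlt
      | succ v hv ih =>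
        intro hvM
        have h1 : E (v+1) < E v := hdown v (by omega) (by omega)
        exact lt_trans h1 (ih (by omega))
    have hc := chain sstar (by omega) sm2
    have hm := hmax s (Finset.mem_Icc.mpr ⟨hs1, by omega⟩)
    linarith
  · intro s hs1 hs2
    by_contra hlt
    push_neg at hlt
    have hall := up s hs2 hlt
    have chain : ∀ v : ℕ, sstar + 1 ≤ v → v ≤ s + 1 → E sstar < E v := by
      intro v hv
      induction v, hv using Nat.le_induction with
      | base => intro _; exact hall sstar sm1 (by omega)
      | succ v hv ih =>
        intro hvs
        have h1 : E v < E (v+1) := hall v (by omega) (by omega)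
        exact lt_trans (ih (by omega)) h1
    have hc := chain (s+1) (by omega) le_rfl
    have hm := hmax (s+1) (Finset.mem_Icc.mpr ⟨by omega, by omega⟩)
    linarith
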